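/- Let S be a set with maps and relations as follows: S = {a,b,c,d,u,v,w,x} and R₃ = {vbw⁻¹, xcw⁻¹, uxd⁻¹, uva⁻¹} interpreted in the free group F(u,v,w,x) via a = uv, b = v⁻¹w, c = x⁻¹w, d = ux. Then the group ⟨S ∣ R₃⟩ is isomorphic to the free group F(u,v,w,x), and in F(u,v,w,x) with S = {uv, v⁻¹w, x⁻¹w, ux, u, v, w, x} one has: for all α,β,γ ∈ S, αβγ ≠ e and αβγ ∉ S. -/

import Mathlib

/-- Generators `a,b,c,d,u,v,w,x` numbered `0,…,7`; the relator set
`R₃ = {vbw⁻¹, xcw⁻¹, uxd⁻¹, uva⁻¹}`. -/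
def relsR3 : Set (FreeGroup (Fin 8)) :=
  { FreeGroup.of (5 : Fin 8) * FreeGroup.of (1 : Fin 8) * (FreeGroup.of (6 : Fin 8))⁻¹,
    FreeGroup.of (7 : Fin 8) * FreeGroup.of (2 : Fin 8) * (FreeGroup.of (6 : Fin 8))⁻¹,
    FreeGroup.of (4 : Fin 8) * FreeGroup.of (7 : Fin 8) * (FreeGroup.of (3 : Fin 8))⁻¹,
    FreeGroup.of (4 : Fin 8) * FreeGroup.of (5 : Fin 8) * (FreeGroup.of (0 : Fin 8))⁻¹ }

/-- The subset `S = {uv, v⁻¹w, x⁻¹w, ux, u, v, w, x}` of the free group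
`F(u,v,w,x)` on generators `u,v,w,x` numbered `0,1,2,3`. -/
def setS9 : Set (FreeGroup (Fin 4)) :=
  { FreeGroup.of 0 * FreeGroup.of 1, (FreeGroup.of 1)⁻¹ * FreeGroup.of 2,
    (FreeGroup.of 3)⁻¹ * FreeGroup.of 2, FreeGroup.of 0 * FreeGroup.of 3,
    FreeGroup.of 0, FreeGroup.of 1, FreeGroup.of 2, FreeGroup.of 3 }

/-- The list version of `setS9`. -/
def listS9 : List (FreeGroup (Fin 4)) :=
  [ FreeGroup.of 0 * FreeGroup.of 1, (FreeGroup.of 1)⁻¹ * FreeGroup.of 2,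
    (FreeGroup.of 3)⁻¹ * FreeGroup.of 2, FreeGroup.of 0 * FreeGroup.of 3,
    FreeGroup.of 0, FreeGroup.of 1, FreeGroup.of 2, FreeGroup.of 3 ]

lemma memS9 (x : FreeGroup (Fin 4)) : x ∈ setS9 ↔ x ∈ listS9 := by
  simp [setS9, listS9, Set.mem_insert_iff]

/-- The images of the generators `a,b,c,d,u,v,w,x` in `F(u,v,w,x)`. -/
def fmapR3 : Fin 8 → FreeGroup (Fin 4)
  | 0 => FreeGroup.of 0 * FreeGroup.of 1
  | 1 => (FreeGroup.of 1)⁻¹ * FreeGroup.of 2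
  | 2 => (FreeGroup.of 3)⁻¹ * FreeGroup.of 2
  | 3 => FreeGroup.of 0 * FreeGroup.of 3
  | 4 => FreeGroup.of 0
  | 5 => FreeGroup.of 1
  | 6 => FreeGroup.of 2
  | 7 => FreeGroup.of 3

lemma hrelsR3 : ∀ r ∈ relsR3, FreeGroup.lift fmapR3 r = 1 := by
  intro r hr
  rcases hr with rfl | rfl | rfl | rfl <;> simp [fmapR3] <;> group

/-- The forward homomorphism. -/
def φR3 : PresentedGroup relsR3 →* FreeGroup (Fin 4) := PresentedGroup.toGroup hrelsR3

/-- The images of `u,v,w,x` in the presented group. -/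
def gmapR3 : Fin 4 → PresentedGroup relsR3
  | 0 => PresentedGroup.of 4
  | 1 => PresentedGroup.of 5
  | 2 => PresentedGroup.of 6
  | 3 => PresentedGroup.of 7

/-- The backward homomorphism. -/
def ψR3 : FreeGroup (Fin 4) →* PresentedGroup relsR3 := FreeGroup.lift gmapR3

lemma relR3_eq (r : FreeGroup (Fin 8)) (h : r ∈ relsR3) :
    (PresentedGroup.mk relsR3 r) = 1 :=
  (QuotientGroup.eq_one_iff _).2 (Subgroup.subset_normalClosure h)

lemma relR3_1 : (PresentedGroup.of 5 : PresentedGroup relsR3) * .of 1 * (.of 6)⁻¹ = 1 := by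
  have := relR3_eq _ (show _ ∈ relsR3 from Or.inl rfl); simp at this; exact this
lemma relR3_2 : (PresentedGroup.of 7 : PresentedGroup relsR3) * .of 2 * (.of 6)⁻¹ = 1 := by
  have := relR3_eq _ (show _ ∈ relsR3 from Or.inr (Or.inl rfl)); simp at this; exact this
lemma relR3_3 : (PresentedGroup.of 4 : PresentedGroup relsR3) * .of 7 * (.of 3)⁻¹ = 1 := by
  have := relR3_eq _ (show _ ∈ relsR3 from Or.inr (Or.inr (Or.inl rfl))); simp at this; exact this
lemma relR3_4 : (PresentedGroup.of 4 : PresentedGroup relsR3) * .of 5 * (.of 0)⁻¹ = 1 := by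
  have := relR3_eq _ (show _ ∈ relsR3 from Or.inr (Or.inr (Or.inr rfl))); simp at this; exact this

/-- The isomorphism `⟨a,b,c,d,u,v,w,x ∣ R₃⟩ ≃* F(u,v,w,x)`. -/
noncomputable def isoR3 : PresentedGroup relsR3 ≃* FreeGroup (Fin 4) := by
  refine MonoidHom.toMulEquiv φR3 ψR3 ?_ ?_
  · ext i
    fin_cases i <;> simp [φR3, ψR3, fmapR3, gmapR3]
    · exact mul_inv_eq_one.mp relR3_4
    · rw [inv_mul_eq_iff_eq_mul]; exact (mul_inv_eq_one.mp relR3_1).symm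
    · rw [inv_mul_eq_iff_eq_mul]; exact (mul_inv_eq_one.mp relR3_2).symm
    · exact mul_inv_eq_one.mp relR3_3
  · ext i
    fin_cases i <;> simp [φR3, ψR3, fmapR3, gmapR3]

/-- The group `⟨a,b,c,d,u,v,w,x ∣ R₃⟩` is isomorphic to the free
group `F(u,v,w,x)`, and in `F(u,v,w,x)` the set
`S = {uv, v⁻¹w, x⁻¹w, ux, u, v, w, x}` satisfies: for all `α,β,γ ∈ S`,
`αβγ ≠ e` and `αβγ ∉ S`. -/
theorem presentation_R3_free_and_no_triple_products :
    Nonempty (PresentedGroup relsR3 ≃* FreeGroup (Fin 4)) ∧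
    (∀ α ∈ setS9, ∀ β ∈ setS9, ∀ γ ∈ setS9,
      α * β * γ ≠ 1 ∧ α * β * γ ∉ setS9) := by
  constructor
  · exact ⟨isoR3⟩
  · simp only [memS9]
    decide
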